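/- arXiv:1811.11246 — 4 statements merged into one kernel-verified Lean document; each statement's English description precedes it below -/
import Mathlib

section
/- Let $q \in (0,1)$ and $v > 0$. Then for every integer $k \ge 0$, $\sum_{m=1}^{k+1} q^{k+1-m} m^{-v} \le q^{k+1} \cdot \frac{e^{2v} q^{-1} - 1}{1 - q} + \frac{2 q^{-1} (k+1)^{-v}}{\ln(1/q)}$. -/
open Finset

set_option maxHeartbeats 1600000 in
theorem stmt_7 (q v : ℝ) (hq0 : 0 < q) (hq1 : q < 1) (hv : 0 < v) :
    ∀ k : ℕ,
      ∑ m ∈ Finset.Icc 1 (k + 1), q ^ (k + 1 - m) * (m : ℝ) ^ (-v) ≤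
        q ^ (k + 1) * (Real.exp (2 * v) * q⁻¹ - 1) / (1 - q) +
          2 * q⁻¹ * ((k : ℝ) + 1) ^ (-v) / Real.log (1 / q) := by
  intro k
  set N : ℕ := k + 1 with hN
  set L : ℝ := Real.log (1 / q) with hL
  have hq1' : (0:ℝ) < 1 - q := by linarith
  have hr1 : 1 < q⁻¹ := by rw [← one_div]; exact one_lt_one_div hq0 hq1
  have hL0 : 0 < L := Real.log_pos (one_lt_one_div hq0 hq1)
  have hLq : L = - Real.log q := by rw [hL, one_div, Real.log_inv]
  set s : ℝ := Real.sqrt q with hs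
  have hs0 : 0 < s := Real.sqrt_pos.2 hq0
  have hsq : s ^ 2 = q := Real.sq_sqrt hq0.le
  have hs1 : s < 1 := by nlinarith [hs0]
  have hlogs : Real.log s = - (L / 2) := by
    have : Real.log q = 2 * Real.log s := by
      rw [← hsq, Real.log_pow]; push_cast; ring
    rw [hLq] at *; linarith
  set M : ℕ := ⌊1 + 2 * v / L⌋₊ with hM
  have hMle : (M : ℝ) ≤ 1 + 2 * v / L := Nat.floor_le (by positivity)
  have hMgt : 2 * v / L < (M : ℝ) := by
    have h := Nat.lt_floor_add_one (1 + 2 * v / L)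
    push_cast at h; linarith
  have hNv : (0:ℝ) ≤ ((N:ℝ)) ^ (-v) := Real.rpow_nonneg (by positivity) _
  have hterm_nonneg : ∀ m : ℕ, (0:ℝ) ≤ q ^ (N - m) * (m : ℝ) ^ (-v) := by
    intro m
    exact mul_nonneg (pow_nonneg hq0.le _) (Real.rpow_nonneg (Nat.cast_nonneg m) _)
  have hsplit :
      ∑ m ∈ Icc 1 N, q ^ (N - m) * (m : ℝ) ^ (-v) =
        ∑ m ∈ (Icc 1 N).filter (fun m => m ≤ M), q ^ (N - m) * (m : ℝ) ^ (-v) +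
        ∑ m ∈ (Icc 1 N).filter (fun m => ¬ m ≤ M), q ^ (N - m) * (m : ℝ) ^ (-v) :=
    (Finset.sum_filter_add_sum_filter_not _ _ _).symm
  -- Small m part
  have h1 :
      ∑ m ∈ (Icc 1 N).filter (fun m => m ≤ M), q ^ (N - m) * (m : ℝ) ^ (-v) ≤
        q ^ N * (Real.exp (2 * v) * q⁻¹ - 1) / (1 - q) := by
    have step1 :
        ∑ m ∈ (Icc 1 N).filter (fun m => m ≤ M), q ^ (N - m) * (m : ℝ) ^ (-v) ≤
          ∑ m ∈ (Icc 1 N).filter (fun m => m ≤ M), q ^ N * (q⁻¹) ^ m := by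
      apply Finset.sum_le_sum
      intro m hm
      simp only [Finset.mem_filter, Finset.mem_Icc] at hm
      obtain ⟨⟨hm1, hmN⟩, hmM⟩ := hm
      have h1' : (m : ℝ) ^ (-v) ≤ 1 :=
        Real.rpow_le_one_of_one_le_of_nonpos (by exact_mod_cast hm1) (by linarith)
      have h2' : q ^ (N - m) = q ^ N * (q⁻¹) ^ m := by
        rw [pow_sub₀ q hq0.ne' hmN, inv_pow]
      calc q ^ (N - m) * (m : ℝ) ^ (-v) ≤ q ^ (N - m) * 1 := by
            exact mul_le_mul_of_nonneg_left h1' (pow_nonneg hq0.le _)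
        _ = q ^ N * (q⁻¹) ^ m := by rw [mul_one, h2']
    have step2 :
        ∑ m ∈ (Icc 1 N).filter (fun m => m ≤ M), q ^ N * (q⁻¹) ^ m ≤
          ∑ m ∈ Icc 1 M, q ^ N * (q⁻¹) ^ m := by
      apply Finset.sum_le_sum_of_subset_of_nonneg
      · intro m hm
        simp only [Finset.mem_filter, Finset.mem_Icc] at hm ⊢
        exact ⟨hm.1.1, hm.2⟩
      · intro m _ _
        positivity
    have step3 :
        ∑ m ∈ Icc 1 M, q ^ N * (q⁻¹) ^ m =
          q ^ N * (((q⁻¹) ^ (M + 1) - q⁻¹) / (q⁻¹ - 1)) := by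
      rw [← Finset.mul_sum]
      congr 1
      have : Icc 1 M = Ico 1 (M + 1) := by
        ext x; simp [Nat.lt_succ_iff]
      rw [this, geom_sum_Ico hr1.ne' (by omega), pow_one]
    have hA : (q⁻¹) ^ M ≤ Real.exp (2 * v) * q⁻¹ := by
      have e1 : (q⁻¹ : ℝ) ^ M = Real.exp ((M : ℝ) * L) := by
        rw [Real.exp_nat_mul, hL, one_div, Real.exp_log (by positivity)]
      rw [e1]
      have e2 : Real.exp (2 * v) * q⁻¹ = Real.exp (2 * v + L) := by
        rw [Real.exp_add, hL, one_div, Real.exp_log (by positivity)]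
      rw [e2]
      apply Real.exp_le_exp.2
      have h6 : (M : ℝ) * L ≤ (1 + 2 * v / L) * L :=
        mul_le_mul_of_nonneg_right hMle hL0.le
      have h7 : (1 + 2 * v / L) * L = 2 * v + L := by
        field_simp
        ring
      linarith
    have step4 :
        ((q⁻¹) ^ (M + 1) - q⁻¹) / (q⁻¹ - 1) ≤ (Real.exp (2 * v) * q⁻¹ - 1) / (1 - q) := by
      have hd1 : (0:ℝ) < q⁻¹ - 1 := by linarith
      rw [div_le_div_iff₀ hd1 hq1', pow_succ]
      have hr1q : q⁻¹ - 1 = q⁻¹ * (1 - q) := by field_simp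
      rw [hr1q]
      have heq : (q⁻¹ ^ M * q⁻¹ - q⁻¹) * (1 - q) = (q⁻¹ ^ M - 1) * (q⁻¹ * (1 - q)) := by
        ring
      rw [heq]
      exact mul_le_mul_of_nonneg_right (by linarith [hA]) (by positivity)
    calc ∑ m ∈ (Icc 1 N).filter (fun m => m ≤ M), q ^ (N - m) * (m : ℝ) ^ (-v)
        ≤ ∑ m ∈ Icc 1 M, q ^ N * (q⁻¹) ^ m := le_trans step1 step2
      _ = q ^ N * (((q⁻¹) ^ (M + 1) - q⁻¹) / (q⁻¹ - 1)) := step3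
      _ ≤ q ^ N * ((Real.exp (2 * v) * q⁻¹ - 1) / (1 - q)) :=
          mul_le_mul_of_nonneg_left step4 (pow_nonneg hq0.le _)
      _ = q ^ N * (Real.exp (2 * v) * q⁻¹ - 1) / (1 - q) := by ring
  -- Large m part
  have h2 :
      ∑ m ∈ (Icc 1 N).filter (fun m => ¬ m ≤ M), q ^ (N - m) * (m : ℝ) ^ (-v) ≤
        2 * q⁻¹ * ((N : ℝ)) ^ (-v) / L := by
    have key : ∀ m ∈ (Icc 1 N).filter (fun m => ¬ m ≤ M),
        q ^ (N - m) * (m : ℝ) ^ (-v) ≤ s ^ (N - m) * ((N : ℝ)) ^ (-v) := by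
      intro m hm
      simp only [Finset.mem_filter, Finset.mem_Icc, not_le] at hm
      obtain ⟨⟨hm1, hmN⟩, hmM⟩ := hm
      have hm0 : (0:ℝ) < m := by exact_mod_cast hm1
      have hN0 : (0:ℝ) < N := by positivity
      have hmR : 2 * v / L < (m : ℝ) := by
        have h8 : (M : ℝ) ≤ m := by exact_mod_cast hmM.le
        linarith [hMgt]
      have hvm : 2 * v < (m : ℝ) * L := by
        rw [div_lt_iff₀ hL0] at hmR; linarith
      have hd0 : (0:ℝ) ≤ (N : ℝ) - m := by
        have : (m:ℝ) ≤ N := by exact_mod_cast hmN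
        linarith
      have hlog : v * (Real.log N - Real.log m) ≤ L / 2 * ((N:ℝ) - m) := by
        have hlog1 : Real.log N - Real.log m = Real.log ((N:ℝ) / m) :=
          (Real.log_div hN0.ne' hm0.ne').symm
        have hlog2 : Real.log ((N:ℝ) / m) ≤ (N:ℝ) / m - 1 :=
          Real.log_le_sub_one_of_pos (by positivity)
        have hlog3 : (N:ℝ) / m - 1 = ((N:ℝ) - m) / m := by field_simp
        have h4 : v * (((N:ℝ) - m) / m) ≤ L / 2 * ((N:ℝ) - m) := by
          have h9 : v * (((N:ℝ) - m) / m) = v * ((N:ℝ) - m) / m := by ring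
          rw [h9, div_le_iff₀ hm0]
          nlinarith [mul_nonneg (show (0:ℝ) ≤ (m:ℝ) * L - 2 * v by linarith) hd0]
        calc v * (Real.log N - Real.log m) ≤ v * (((N:ℝ) - m) / m) := by
              rw [hlog1]
              refine mul_le_mul_of_nonneg_left ?_ hv.le
              rw [← hlog3]; linarith
          _ ≤ L / 2 * ((N:ℝ) - m) := h4
      have hcast : ((N - m : ℕ) : ℝ) = (N:ℝ) - m := by
        push_cast [Nat.cast_sub hmN]; ring
      have e1 : q ^ (N - m) = Real.exp (((N - m : ℕ) : ℝ) * Real.log q) := by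
        rw [Real.exp_nat_mul, Real.exp_log hq0]
      have e2 : s ^ (N - m) = Real.exp (((N - m : ℕ) : ℝ) * Real.log s) := by
        rw [Real.exp_nat_mul, Real.exp_log hs0]
      have e3 : (m : ℝ) ^ (-v) = Real.exp (Real.log m * (-v)) := by
        rw [Real.rpow_def_of_pos hm0]
      have e4 : ((N : ℝ)) ^ (-v) = Real.exp (Real.log N * (-v)) := by
        rw [Real.rpow_def_of_pos hN0]
      rw [e1, e2, e3, e4, ← Real.exp_add, ← Real.exp_add]
      apply Real.exp_le_exp.2
      rw [hcast]
      have hlq : Real.log q = -L := by rw [hLq]; ring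
      rw [hlq, hlogs]
      linarith [hlog]
    have step1 :
        ∑ m ∈ (Icc 1 N).filter (fun m => ¬ m ≤ M), q ^ (N - m) * (m : ℝ) ^ (-v) ≤
          ∑ m ∈ Icc 1 N, s ^ (N - m) * ((N : ℝ)) ^ (-v) := by
      calc ∑ m ∈ (Icc 1 N).filter (fun m => ¬ m ≤ M), q ^ (N - m) * (m : ℝ) ^ (-v)
          ≤ ∑ m ∈ (Icc 1 N).filter (fun m => ¬ m ≤ M), s ^ (N - m) * ((N : ℝ)) ^ (-v) :=
            Finset.sum_le_sum key
        _ ≤ ∑ m ∈ Icc 1 N, s ^ (N - m) * ((N : ℝ)) ^ (-v) := by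
            apply Finset.sum_le_sum_of_subset_of_nonneg (Finset.filter_subset _ _)
            intro m _ _
            exact mul_nonneg (pow_nonneg hs0.le _) hNv
    have step2 : ∑ m ∈ Icc 1 N, s ^ (N - m) * ((N : ℝ)) ^ (-v) =
        (∑ j ∈ range N, s ^ j) * ((N : ℝ)) ^ (-v) := by
      rw [← Finset.sum_mul]
      congr 1
      apply Finset.sum_nbij' (fun m => N - m) (fun j => N - j)
      · intro a ha; simp at ha ⊢; omega
      · intro a ha; simp at ha ⊢; omega
      · intro a ha; simp at ha ⊢; omega
      · intro a ha; simp at ha ⊢; omega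
      · intro a ha; rfl
    have step3 : (∑ j ∈ range N, s ^ j) ≤ 1 / (1 - s) := by
      rw [geom_sum_eq hs1.ne N]
      have h1s : (0:ℝ) < 1 - s := by linarith
      have heq : (s ^ N - 1) / (s - 1) = (1 - s ^ N) / (1 - s) := by
        rw [div_eq_div_iff (by linarith) (by linarith : (1:ℝ) - s ≠ 0)]
        ring
      rw [heq, div_le_div_iff₀ h1s h1s]
      nlinarith [pow_nonneg hs0.le N]
    have hkey : q * L ≤ 2 * (1 - s) := by
      have h5 : Real.log s⁻¹ ≤ s⁻¹ - 1 := Real.log_le_sub_one_of_pos (by positivity)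
      rw [Real.log_inv, hlogs] at h5
      have h5' : L ≤ 2 * (s⁻¹ - 1) := by linarith
      have h6 : s ^ 2 * L ≤ s ^ 2 * (2 * (s⁻¹ - 1)) :=
        mul_le_mul_of_nonneg_left h5' (by positivity)
      have h7 : s ^ 2 * (2 * (s⁻¹ - 1)) = 2 * (s - s ^ 2) := by
        field_simp
      have h12 : q * L = s ^ 2 * L := by rw [hsq]
      have h13 : 2 * (s - s ^ 2) ≤ 2 * (1 - s) := by nlinarith [sq_nonneg (s - 1)]
      linarith [h6, h7, h12, h13]
    have step4 : (1 / (1 - s)) * ((N : ℝ)) ^ (-v) ≤ 2 * q⁻¹ * ((N : ℝ)) ^ (-v) / L := by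
      have h1s : (0:ℝ) < 1 - s := by linarith
      have hc : 1 / (1 - s) ≤ 2 * q⁻¹ / L := by
        rw [div_le_div_iff₀ h1s hL0]
        have h10 : q⁻¹ * (q * L) ≤ q⁻¹ * (2 * (1 - s)) :=
          mul_le_mul_of_nonneg_left hkey (inv_pos.2 hq0).le
        have h11 : q⁻¹ * (q * L) = L := by field_simp
        linarith
      calc (1 / (1 - s)) * ((N : ℝ)) ^ (-v) ≤ (2 * q⁻¹ / L) * ((N : ℝ)) ^ (-v) :=
            mul_le_mul_of_nonneg_right hc hNv
        _ = 2 * q⁻¹ * ((N : ℝ)) ^ (-v) / L := by ring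
    calc ∑ m ∈ (Icc 1 N).filter (fun m => ¬ m ≤ M), q ^ (N - m) * (m : ℝ) ^ (-v)
        ≤ (∑ j ∈ range N, s ^ j) * ((N : ℝ)) ^ (-v) := by rw [← step2]; exact step1
      _ ≤ (1 / (1 - s)) * ((N : ℝ)) ^ (-v) := mul_le_mul_of_nonneg_right step3 hNv
      _ ≤ 2 * q⁻¹ * ((N : ℝ)) ^ (-v) / L := step4
  have hNcast : ((k : ℝ) + 1) = (N : ℝ) := by push_cast [hN]; ring
  rw [hNcast]
  rw [hsplit]
  linarith [h1, h2]
end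

section
/- Let $\beta \in (0,1)$, $u \in (0,1]$, and $\tau_p = \lceil (p+1)^u \rceil$. Then for every integer $k \ge 1$, $\sum_{s=1}^{k} \beta^{\sum_{p=s}^{k} \tau_p} \le e \left(\ln(\beta^{-1/(u+1)})\right)^{-1/(u+1)} \beta^{(k+1)^{u+1}/(u+1)} + \beta^{((k+1)^{u+1} - k^{u+1})/(u+1)} \left(1 + \frac{u+1}{k^u \ln(1/\beta)}\right)$. -/
open Real MeasureTheory intervalIntegral

private lemma tangent_ineq {u : ℝ} (hu : 0 ≤ u) {x b : ℝ} (hx : 0 ≤ x) (hxb : x ≤ b)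
    (hb : 0 < b) : b ^ (u + 1) - x ^ (u + 1) ≤ (u + 1) * b ^ u * (b - x) := by
  have hs : -1 ≤ x / b - 1 := by
    have h0 : 0 ≤ x / b := div_nonneg hx hb.le
    linarith
  have hber := one_add_mul_self_le_rpow_one_add hs (by linarith : (1:ℝ) ≤ u + 1)
  rw [show (1 : ℝ) + (x / b - 1) = x / b by ring, Real.div_rpow hx hb.le] at hber
  have hbu1 : 0 < b ^ (u + 1) := Real.rpow_pos_of_pos hb _
  have h4 := (le_div_iff₀ hbu1).mp hber
  have h5 : (1 + (u + 1) * (x / b - 1)) * b ^ (u + 1)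
      = b ^ (u + 1) - (u + 1) * b ^ u * (b - x) := by
    rw [Real.rpow_add_one hb.ne' u]
    field_simp
    ring
  rw [h5] at h4
  linarith

private lemma key_sum {u c : ℝ} (hu : 0 < u) (hc : 0 < c) (k : ℕ) (hk : 1 ≤ k) :
    ∑ s ∈ Finset.Icc 1 k, Real.exp (c * (s : ℝ) ^ (u + 1)) ≤
      Real.exp 1 * c ^ (-(1 / (u + 1))) +
        Real.exp (c * (k : ℝ) ^ (u + 1)) * (1 + 1 / (c * (k : ℝ) ^ u)) := by
  have hu1 : (0:ℝ) < u + 1 := by linarith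
  have hFcont : Continuous (fun x : ℝ => Real.exp (c * x ^ (u + 1))) := by
    apply Real.continuous_exp.comp
    exact continuous_const.mul (continuous_iff_continuousAt.2 fun x =>
      Real.continuousAt_rpow_const x (u + 1) (Or.inr hu1.le))
  have hInt : ∀ a b : ℝ,
      IntervalIntegrable (fun x : ℝ => Real.exp (c * x ^ (u + 1))) volume a b :=
    fun a b => hFcont.intervalIntegrable a b
  have ha0 : 0 < c ^ (-(1 / (u + 1))) := Real.rpow_pos_of_pos hc _
  set a : ℝ := c ^ (-(1 / (u + 1))) with haa
  have hapow : a ^ (u + 1) = c⁻¹ := by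
    rw [haa, ← Real.rpow_mul hc.le]
    rw [show -(1 / (u + 1)) * (u + 1) = -1 by field_simp]
    exact Real.rpow_neg_one c
  have hca : c * a ^ (u + 1) = 1 := by
    rw [hapow]; field_simp
  by_cases hck : c * (k : ℝ) ^ (u + 1) ≤ 1
  · -- small case : every term is at most e, and k ≤ a
    have hka : (k : ℝ) ≤ a := by
      by_contra h
      push_neg at h
      have h2 := Real.rpow_lt_rpow ha0.le h hu1
      nlinarith
    have hterm : ∀ s ∈ Finset.Icc 1 k, Real.exp (c * (s:ℝ) ^ (u+1)) ≤ Real.exp 1 := by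
      intro s hs
      rw [Finset.mem_Icc] at hs
      have hsk : (s:ℝ) ≤ (k:ℝ) := Nat.cast_le.2 hs.2
      have h3 := Real.rpow_le_rpow (Nat.cast_nonneg s) hsk hu1.le
      have h2 : c * (s:ℝ) ^ (u+1) ≤ 1 := le_trans (by nlinarith) hck
      exact Real.exp_le_exp.2 h2
    calc ∑ s ∈ Finset.Icc 1 k, Real.exp (c * (s : ℝ) ^ (u + 1))
        ≤ ∑ _s ∈ Finset.Icc 1 k, Real.exp 1 := Finset.sum_le_sum hterm
      _ = (k : ℝ) * Real.exp 1 := by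
          rw [Finset.sum_const, Nat.card_Icc]
          simp [nsmul_eq_mul]
      _ ≤ Real.exp 1 * a := by
          rw [mul_comm]
          exact mul_le_mul_of_nonneg_left hka (Real.exp_pos 1).le
      _ ≤ _ := by
          have hpos : 0 < Real.exp (c * (k : ℝ) ^ (u + 1)) * (1 + 1 / (c * (k : ℝ) ^ u)) := by
            have : (0:ℝ) < (k:ℝ) ^ u := Real.rpow_pos_of_pos (by exact_mod_cast hk) u
            have h1 : (0:ℝ) < 1 + 1 / (c * (k : ℝ) ^ u) := by positivity
            positivity
          linarith
  · push_neg at hck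
    have hak : a < (k : ℝ) := by
      by_contra h
      push_neg at h
      have h2 := Real.rpow_le_rpow (Nat.cast_nonneg k) h hu1.le
      nlinarith
    -- sum to integral comparison
    have hsum_int : ∀ n : ℕ, ∑ s ∈ Finset.Icc 1 n, Real.exp (c * (s:ℝ) ^ (u+1)) ≤
        ∫ x in (1:ℝ)..((n:ℝ)+1), Real.exp (c * x ^ (u+1)) := by
      intro n
      induction n with
      | zero => simp
      | succ n ih =>
        rw [Finset.sum_Icc_succ_top (by omega : 1 ≤ n + 1)]
        have hstep : Real.exp (c * ((n:ℝ)+1) ^ (u+1)) ≤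
            ∫ x in ((n:ℝ)+1)..((n:ℝ)+2), Real.exp (c * x ^ (u+1)) := by
          have hmono := intervalIntegral.integral_mono_on (by linarith : (n:ℝ)+1 ≤ (n:ℝ)+2)
            (_root_.intervalIntegrable_const (c := Real.exp (c * ((n:ℝ)+1) ^ (u+1)))) (hInt _ _)
            (fun x hx => by
              have hx0 : (0:ℝ) ≤ (n:ℝ)+1 := by positivity
              have h3 := Real.rpow_le_rpow hx0 hx.1 hu1.le
              exact Real.exp_le_exp.2 (mul_le_mul_of_nonneg_left h3 hc.le))
          rw [intervalIntegral.integral_const,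
            show ((n:ℝ)+2 - ((n:ℝ)+1)) = 1 by ring, one_smul] at hmono
          exact hmono
        have hadd := intervalIntegral.integral_add_adjacent_intervals
          (hInt 1 ((n:ℝ)+1)) (hInt ((n:ℝ)+1) ((n:ℝ)+2))
        push_cast
        push_cast at ih
        rw [show (n:ℝ)+1+1 = (n:ℝ)+2 by ring]
        calc (∑ s ∈ Finset.Icc 1 n, Real.exp (c * (s:ℝ) ^ (u+1)))
              + Real.exp (c * ((n:ℝ)+1) ^ (u+1))
            ≤ (∫ x in (1:ℝ)..((n:ℝ)+1), Real.exp (c * x ^ (u+1)))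
              + ∫ x in ((n:ℝ)+1)..((n:ℝ)+2), Real.exp (c * x ^ (u+1)) := add_le_add ih hstep
          _ = ∫ x in (1:ℝ)..((n:ℝ)+2), Real.exp (c * x ^ (u+1)) := hadd
    obtain ⟨m, rfl⟩ : ∃ m, k = m + 1 := ⟨k - 1, by omega⟩
    have hK0 : (0:ℝ) < (m:ℝ) + 1 := by positivity
    have haK : a < (m:ℝ) + 1 := by push_cast at hak; exact hak
    -- the primitive-comparison function is monotone on [a, m+1]
    have hder : ∀ t : ℝ, a ≤ t → HasDerivAt
        (fun t => Real.exp (c * t ^ (u + 1)) / (c * t ^ u)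
          - ∫ x in a..t, Real.exp (c * x ^ (u+1)))
        ((Real.exp (c * t ^ (u + 1)) * (c * ((u + 1) * t ^ u)) * (c * t ^ u) -
            Real.exp (c * t ^ (u + 1)) * (c * (u * t ^ (u - 1)))) / (c * t ^ u) ^ 2
          - Real.exp (c * t ^ (u+1))) t := by
      intro t ht
      have ht0 : 0 < t := lt_of_lt_of_le ha0 ht
      have h1 : HasDerivAt (fun x : ℝ => x ^ (u + 1)) ((u + 1) * t ^ u) t := by
        have h := Real.hasDerivAt_rpow_const (x := t) (p := u + 1) (Or.inl ht0.ne')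
        simpa [add_sub_cancel_right] using h
      have hN : HasDerivAt (fun x : ℝ => Real.exp (c * x ^ (u + 1)))
          (Real.exp (c * t ^ (u + 1)) * (c * ((u + 1) * t ^ u))) t := (h1.const_mul c).exp
      have h3 : HasDerivAt (fun x : ℝ => x ^ u) (u * t ^ (u - 1)) t :=
        Real.hasDerivAt_rpow_const (Or.inl ht0.ne')
      have hD : HasDerivAt (fun x : ℝ => c * x ^ u) (c * (u * t ^ (u - 1))) t := h3.const_mul c
      have htu : (0:ℝ) < t ^ u := Real.rpow_pos_of_pos ht0 u
      have hD0 : c * t ^ u ≠ 0 := by positivity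
      have hprim : HasDerivAt (fun x : ℝ => ∫ y in a..x, Real.exp (c * y ^ (u+1)))
          (Real.exp (c * t ^ (u+1))) t :=
        intervalIntegral.integral_hasDerivAt_right (hInt a t)
          (hFcont.stronglyMeasurableAtFilter _ _) hFcont.continuousAt
      exact (hN.div hD hD0).sub hprim
    have hmono : MonotoneOn
        (fun t => Real.exp (c * t ^ (u + 1)) / (c * t ^ u)
          - ∫ x in a..t, Real.exp (c * x ^ (u+1))) (Set.Icc a ((m:ℝ)+1)) := by
      apply monotoneOn_of_deriv_nonneg (convex_Icc a ((m:ℝ)+1))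
      · exact fun t ht => ((hder t ht.1).differentiableAt.continuousAt).continuousWithinAt
      · intro t ht
        rw [interior_Icc] at ht
        exact (hder t ht.1.le).differentiableAt.differentiableWithinAt
      · intro t ht
        rw [interior_Icc] at ht
        rw [(hder t ht.1.le).deriv]
        have ht0 : 0 < t := lt_of_lt_of_le ha0 ht.1.le
        have hE : (0:ℝ) < Real.exp (c * t ^ (u + 1)) := Real.exp_pos _
        have htu : (0:ℝ) < t ^ u := Real.rpow_pos_of_pos ht0 u
        have htu1 : (0:ℝ) < t ^ (u - 1) := Real.rpow_pos_of_pos ht0 _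
        have hct : 1 ≤ c * t ^ (u + 1) := by
          have h3 := Real.rpow_le_rpow ha0.le ht.1.le hu1.le
          nlinarith
        have hid : t ^ u * t ^ u = t ^ (u + 1) * t ^ (u - 1) := by
          rw [← Real.rpow_add ht0, ← Real.rpow_add ht0]
          ring_nf
        rw [sub_nonneg, le_div_iff₀ (by positivity : (0:ℝ) < (c * t ^ u) ^ 2)]
        have hfact : 0 ≤ (Real.exp (c * t ^ (u+1)) * (c * u * t ^ (u-1)))
            * (c * t ^ (u+1) - 1) :=
          mul_nonneg (mul_nonneg hE.le
            (mul_nonneg (mul_nonneg hc.le hu.le) htu1.le)) (by linarith)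
        have hkey : Real.exp (c * t ^ (u+1)) * (c * ((u + 1) * t ^ u)) * (c * t ^ u)
            - Real.exp (c * t ^ (u+1)) * (c * (u * t ^ (u-1)))
            - Real.exp (c * t ^ (u+1)) * (c * t ^ u) ^ 2
            = Real.exp (c * t ^ (u+1)) * (c * u * t ^ (u-1)) * (c * t ^ (u+1) - 1) := by
          linear_combination (Real.exp (c * t ^ (u+1)) * c * c * u) * hid
        linarith [hfact, hkey]
    have hga : Real.exp (c * a ^ (u+1)) / (c * a ^ u)
          - (∫ x in a..a, Real.exp (c * x ^ (u+1))) ≤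
        Real.exp (c * ((m:ℝ)+1) ^ (u+1)) / (c * ((m:ℝ)+1) ^ u)
          - ∫ x in a..((m:ℝ)+1), Real.exp (c * x ^ (u+1)) :=
      hmono (Set.left_mem_Icc.2 haK.le) (Set.right_mem_Icc.2 haK.le) haK.le
    rw [intervalIntegral.integral_same] at hga
    have hIaK : ∫ x in a..((m:ℝ)+1), Real.exp (c * x ^ (u+1)) ≤
        Real.exp (c * ((m:ℝ)+1) ^ (u+1)) / (c * ((m:ℝ)+1) ^ u) := by
      have h0 : (0:ℝ) < Real.exp (c * a ^ (u+1)) / (c * a ^ u) :=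
        div_pos (Real.exp_pos _) (mul_pos hc (Real.rpow_pos_of_pos ha0 u))
      linarith
    have hIa : ∫ x in (0:ℝ)..a, Real.exp (c * x ^ (u+1)) ≤ Real.exp 1 * a := by
      have hm := intervalIntegral.integral_mono_on ha0.le (hInt 0 a)
        (_root_.intervalIntegrable_const (c := Real.exp 1))
        (fun x hx => by
          have h3 := Real.rpow_le_rpow hx.1 hx.2 hu1.le
          exact Real.exp_le_exp.2 (by nlinarith))
      simpa [mul_comm] using hm
    have h01 : (0:ℝ) ≤ ∫ x in (0:ℝ)..(1:ℝ), Real.exp (c * x ^ (u+1)) :=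
      intervalIntegral.integral_nonneg zero_le_one (fun x _ => (Real.exp_pos _).le)
    have hadd1 := intervalIntegral.integral_add_adjacent_intervals
      (hInt 0 1) (hInt 1 ((m:ℝ)+1))
    have hadd2 := intervalIntegral.integral_add_adjacent_intervals
      (hInt 0 a) (hInt a ((m:ℝ)+1))
    have hsplit := hsum_int m
    rw [Finset.sum_Icc_succ_top (by omega : 1 ≤ m + 1)]
    have hcK : (0:ℝ) < c * ((m:ℝ)+1) ^ u := mul_pos hc (Real.rpow_pos_of_pos hK0 u)
    have hring : Real.exp (c * ((m:ℝ)+1) ^ (u+1)) * (1 + 1 / (c * ((m:ℝ)+1) ^ u))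
        = Real.exp (c * ((m:ℝ)+1) ^ (u+1))
          + Real.exp (c * ((m:ℝ)+1) ^ (u+1)) / (c * ((m:ℝ)+1) ^ u) := by
      field_simp
    push_cast
    push_cast at hring hIaK hadd1 hadd2 hsplit
    rw [hring]
    linarith

theorem stmt_12 (β u : ℝ) (hβ0 : 0 < β) (hβ1 : β < 1) (hu0 : 0 < u) (hu1 : u ≤ 1)
    (τ : ℕ → ℕ) (hτ : ∀ p, τ p = ⌈((p : ℝ) + 1) ^ u⌉₊) :
    ∀ k : ℕ, 1 ≤ k →
      ∑ s ∈ Finset.Icc 1 k, β ^ (∑ p ∈ Finset.Icc s k, τ p) ≤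
        Real.exp 1 * (Real.log (β ^ (-(1 / (u + 1))))) ^ (-(1 / (u + 1))) *
            β ^ (((k : ℝ) + 1) ^ (u + 1) / (u + 1)) +
          β ^ ((((k : ℝ) + 1) ^ (u + 1) - (k : ℝ) ^ (u + 1)) / (u + 1)) *
            (1 + (u + 1) / ((k : ℝ) ^ u * Real.log (1 / β))) := by
  intro k hk
  have hup1 : (0:ℝ) < u + 1 := by linarith
  have hlogβ : Real.log β < 0 := Real.log_neg hβ0 hβ1
  have hLdef : Real.log (1/β) = -Real.log β := by rw [one_div, Real.log_inv]
  have hL0 : 0 < Real.log (1/β) := by rw [hLdef]; linarith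
  set c : ℝ := Real.log (1/β) / (u+1) with hcdef
  have hc0 : 0 < c := div_pos hL0 hup1
  have hlogβc : Real.log β = -((u+1) * c) := by
    rw [hcdef]
    field_simp [hLdef]
    linarith [hLdef]
  -- tangent bound
  have htan : ∀ p : ℕ, ((p:ℝ)+1) ^ (u+1) - (p:ℝ) ^ (u+1) ≤ ((p:ℝ)+1) ^ u * (u+1) := by
    intro p
    have h := tangent_ineq hu0.le (Nat.cast_nonneg p)
      (by linarith : (p:ℝ) ≤ (p:ℝ)+1) (by positivity)
    have h2 : (u+1) * ((p:ℝ)+1) ^ u * (((p:ℝ)+1) - (p:ℝ)) = ((p:ℝ)+1) ^ u * (u+1) := by ring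
    linarith
  -- lower bound for the exponent sums
  have hτsum : ∀ s k : ℕ, s ≤ k →
      (((k:ℝ)+1)^(u+1) - (s:ℝ)^(u+1))/(u+1) ≤ (∑ p ∈ Finset.Icc s k, τ p : ℝ) := by
    intro s k hsk
    induction k, hsk using Nat.le_induction with
    | base =>
      rw [Finset.Icc_self, Finset.sum_singleton, hτ s, div_le_iff₀ hup1]
      have hceil : ((s:ℝ)+1) ^ u ≤ ((⌈((s:ℝ)+1) ^ u⌉₊ : ℕ) : ℝ) := Nat.le_ceil _
      have hmul := mul_le_mul_of_nonneg_right hceil hup1.le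
      have := htan s
      linarith
    | succ n hn ih =>
      rw [Finset.sum_Icc_succ_top (by omega : s ≤ n + 1), Nat.cast_add, hτ (n+1)]
      rw [div_le_iff₀ hup1] at ih ⊢
      have hceil : (((n+1:ℕ):ℝ)+1) ^ u ≤ ((⌈(((n+1:ℕ):ℝ)+1) ^ u⌉₊ : ℕ) : ℝ) := Nat.le_ceil _
      have hmul := mul_le_mul_of_nonneg_right hceil hup1.le
      have htn := htan (n+1)
      push_cast at hceil hmul htn ih ⊢
      linarith
  -- termwise bound
  have hterm : ∀ s ∈ Finset.Icc 1 k, β ^ (∑ p ∈ Finset.Icc s k, τ p) ≤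
      Real.exp (c * (s:ℝ)^(u+1)) * Real.exp (-(c * ((k:ℝ)+1)^(u+1))) := by
    intro s hs
    rw [Finset.mem_Icc] at hs
    have h1 : β ^ (∑ p ∈ Finset.Icc s k, τ p)
        = β ^ (((∑ p ∈ Finset.Icc s k, τ p : ℕ) : ℝ)) := (Real.rpow_natCast β _).symm
    rw [h1, Nat.cast_sum]
    have h2 := Real.rpow_le_rpow_of_exponent_ge hβ0 hβ1.le (hτsum s k hs.2)
    refine le_trans h2 (le_of_eq ?_)
    rw [Real.rpow_def_of_pos hβ0, ← Real.exp_add]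
    congr 1
    rw [hlogβc]
    field_simp
    ring
  -- rewrite the right-hand side
  have hk0 : (0:ℝ) < (k:ℝ) := by exact_mod_cast hk
  have hku : (0:ℝ) < (k:ℝ) ^ u := Real.rpow_pos_of_pos hk0 u
  have hlog1 : Real.log (β ^ (-(1 / (u + 1)))) = c := by
    rw [Real.log_rpow hβ0, hlogβc]
    field_simp
  have hrp1 : β ^ (((k:ℝ)+1)^(u+1)/(u+1)) = Real.exp (-(c * ((k:ℝ)+1)^(u+1))) := by
    rw [Real.rpow_def_of_pos hβ0, hlogβc]
    congr 1
    field_simp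
  have hrp2 : β ^ ((((k:ℝ)+1)^(u+1) - (k:ℝ)^(u+1))/(u+1))
      = Real.exp (c * (k:ℝ)^(u+1)) * Real.exp (-(c * ((k:ℝ)+1)^(u+1))) := by
    rw [Real.rpow_def_of_pos hβ0, ← Real.exp_add]
    congr 1
    rw [hlogβc]
    field_simp
    ring
  have hfrac : (u+1) / ((k:ℝ)^u * Real.log (1/β)) = 1/(c * (k:ℝ)^u) := by
    have hc1 : (0:ℝ) < c * (k:ℝ)^u := mul_pos hc0 hku
    rw [div_eq_div_iff (mul_pos hku hL0).ne' hc1.ne', hcdef]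
    field_simp
  calc ∑ s ∈ Finset.Icc 1 k, β ^ (∑ p ∈ Finset.Icc s k, τ p)
      ≤ ∑ s ∈ Finset.Icc 1 k,
          Real.exp (c * (s:ℝ)^(u+1)) * Real.exp (-(c * ((k:ℝ)+1)^(u+1))) :=
        Finset.sum_le_sum hterm
    _ = (∑ s ∈ Finset.Icc 1 k, Real.exp (c * (s:ℝ)^(u+1)))
          * Real.exp (-(c * ((k:ℝ)+1)^(u+1))) := by
        rw [Finset.sum_mul]
    _ ≤ (Real.exp 1 * c ^ (-(1/(u+1)))
          + Real.exp (c * (k:ℝ)^(u+1)) * (1 + 1/(c * (k:ℝ)^u)))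
          * Real.exp (-(c * ((k:ℝ)+1)^(u+1))) :=
        mul_le_mul_of_nonneg_right (key_sum hu0 hc0 k hk) (Real.exp_pos _).le
    _ = _ := by
        rw [hlog1, hrp1, hrp2, hfrac]
        ring
end

section
/- Let $q \in (0,1)$ and $v > 0$, and set $m_0 = \lceil 2v/\ln(1/q) \rceil$. Then $\int_{m_0}^{k+1} \frac{q^{-t}}{t^v} \, dt \le \frac{2 q^{-(k+1)} (k+1)^{-v}}{\ln(1/q)}$ for every integer $k+1 \ge m_0$. -/
open Real intervalIntegral

theorem stmt_16 (q v : ℝ) (hq0 : 0 < q) (hq1 : q < 1) (hv : 0 < v)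
    (k : ℕ) (hk : (⌈2 * v / Real.log (1 / q)⌉₊ : ℝ) ≤ (k : ℝ) + 1) :
    ∫ t in (⌈2 * v / Real.log (1 / q)⌉₊ : ℝ)..((k : ℝ) + 1),
        q ^ (-t) / t ^ v ≤
      2 * q ^ (-((k : ℝ) + 1)) * ((k : ℝ) + 1) ^ (-v) / Real.log (1 / q) := by
  set L := Real.log (1 / q) with hLdef
  have hq : q ≠ 0 := ne_of_gt hq0
  have hlogq : Real.log q = -L := by
    rw [hLdef, Real.log_div one_ne_zero hq, Real.log_one]; ring
  have hL : 0 < L := by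
    have := Real.log_neg hq0 hq1
    rw [hlogq] at this; linarith
  set a := (⌈2 * v / L⌉₊ : ℝ) with hadef
  set b := (k : ℝ) + 1 with hbdef
  have ha1 : (1 : ℝ) ≤ a := by
    have h0 : 0 < 2 * v / L := by positivity
    rw [hadef]
    exact_mod_cast Nat.one_le_ceil_iff.mpr h0
  have ha2 : 2 * v / L ≤ a := Nat.le_ceil _
  have hab : a ≤ b := hk
  set g := fun t : ℝ => (2 / L) * ((q ^ (-t) * L) * t ^ (-v) + q ^ (-t) * (-v * t ^ (-v - 1)))
    with hgdef
  set G := fun t : ℝ => (2 / L) * (q ^ (-t) * t ^ (-v)) with hGdef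
  have hcq : Continuous fun t : ℝ => q ^ (-t) :=
    continuous_const.rpow continuous_neg fun x => Or.inl hq
  have hderiv : ∀ t ∈ Set.Icc a b, HasDerivAt G (g t) t := by
    intro t ht
    have ht0 : 0 < t := lt_of_lt_of_le one_pos (ha1.trans ht.1)
    have h1 : HasDerivAt (fun t : ℝ => q ^ (-t)) (q ^ (-t) * Real.log q * (-1)) t :=
      HasDerivAt.comp t ((Real.hasStrictDerivAt_const_rpow hq0 (-t)).hasDerivAt)
        (hasDerivAt_neg t)
    have h2 : HasDerivAt (fun t : ℝ => t ^ (-v)) ((-v) * t ^ (-v - 1)) t :=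
      Real.hasDerivAt_rpow_const (Or.inl ht0.ne')
    have h3 := (h1.mul h2).const_mul (2 / L)
    exact h3.congr_deriv (by rw [hlogq]; ring)
  have hgcont : ContinuousOn g (Set.Icc a b) := by
    have htv : ContinuousOn (fun t : ℝ => t ^ (-v)) (Set.Icc a b) :=
      ContinuousOn.rpow_const continuousOn_id fun x hx =>
        Or.inl (ne_of_gt (lt_of_lt_of_le one_pos (ha1.trans hx.1)))
    have htv1 : ContinuousOn (fun t : ℝ => t ^ (-v - 1)) (Set.Icc a b) :=
      ContinuousOn.rpow_const continuousOn_id fun x hx =>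
        Or.inl (ne_of_gt (lt_of_lt_of_le one_pos (ha1.trans hx.1)))
    exact continuousOn_const.mul
      (((hcq.continuousOn.mul continuousOn_const).mul htv).add
        (hcq.continuousOn.mul (continuousOn_const.mul htv1)))
  have hfcont : ContinuousOn (fun t : ℝ => q ^ (-t) / t ^ v) (Set.Icc a b) := by
    apply hcq.continuousOn.div
    · exact ContinuousOn.rpow_const continuousOn_id fun x hx =>
        Or.inl (ne_of_gt (lt_of_lt_of_le one_pos (ha1.trans hx.1)))
    · intro x hx
      exact ne_of_gt (Real.rpow_pos_of_pos (lt_of_lt_of_le one_pos (ha1.trans hx.1)) v)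
  have hgint : IntervalIntegrable g MeasureTheory.volume a b :=
    (hgcont.mono (by rw [Set.uIcc_of_le hab])).intervalIntegrable
  have hfint : IntervalIntegrable (fun t : ℝ => q ^ (-t) / t ^ v) MeasureTheory.volume a b :=
    (hfcont.mono (by rw [Set.uIcc_of_le hab])).intervalIntegrable
  have hle : ∀ t ∈ Set.Icc a b, q ^ (-t) / t ^ v ≤ g t := by
    intro t ht
    have ht0 : 0 < t := lt_of_lt_of_le one_pos (ha1.trans ht.1)
    have ht2 : 2 * v / L ≤ t := ha2.trans ht.1
    have h2v : 2 * v ≤ t * L := (div_le_iff₀ hL).mp ht2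
    have hA : 0 < q ^ (-t) := Real.rpow_pos_of_pos hq0 _
    have hB : 0 < t ^ (-v - 1) := Real.rpow_pos_of_pos ht0 _
    have hBt : t ^ (-v) = t ^ (-v - 1) * t := by
      rw [← Real.rpow_add_one ht0.ne' (-v - 1)]; norm_num
    have hdiv : q ^ (-t) / t ^ v = q ^ (-t) * t ^ (-v) := by
      rw [Real.rpow_neg ht0.le, div_eq_mul_inv]
    rw [hdiv, hgdef]
    simp only [hBt]
    rw [div_mul_eq_mul_div, le_div_iff₀ hL]
    nlinarith [mul_le_mul_of_nonneg_right h2v (mul_pos hA hB).le]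
  have hmono := integral_mono_on hab hfint hgint hle
  have hftc : ∫ t in a..b, g t = G b - G a :=
    integral_eq_sub_of_hasDerivAt
      (fun t ht => hderiv t (by rwa [Set.uIcc_of_le hab] at ht)) hgint
  have hGa : 0 ≤ G a := by
    have hA : 0 ≤ q ^ (-a) := (Real.rpow_pos_of_pos hq0 _).le
    have hB : 0 ≤ a ^ (-v) := (Real.rpow_pos_of_pos (lt_of_lt_of_le one_pos ha1) _).le
    rw [hGdef]; positivity
  have hGb : G b = 2 * q ^ (-b) * b ^ (-v) / L := by rw [hGdef]; ring
  calc ∫ t in a..b, q ^ (-t) / t ^ v ≤ ∫ t in a..b, g t := hmono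
    _ = G b - G a := hftc
    _ ≤ G b := by linarith
    _ = 2 * q ^ (-b) * b ^ (-v) / L := hGb
end

section
/- Let $b > 1$, $u \in (0,1)$, and let $k_0 = \lfloor (\ln b)^{-1/(u+1)} \rfloor$. Then for every integer $k > k_0$, $\int_{(k_0+1)^{u+1}}^{k^{u+1}} \frac{b^t}{t^{u/(u+1)}}\,dt \le \frac{(u+1)\, b^{k^{u+1}}}{k^u \ln b}$. -/
theorem stmt_19 (b u : ℝ) (hb : 1 < b) (hu0 : 0 < u) (hu1 : u < 1)
    (k : ℕ) (hk : ⌊(Real.log b) ^ (-(1 / (u + 1)))⌋₊ < k) :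
    ∫ t in (((⌊(Real.log b) ^ (-(1 / (u + 1)))⌋₊ : ℝ) + 1) ^ (u + 1))..((k : ℝ) ^ (u + 1)),
        b ^ t / t ^ (u / (u + 1)) ≤
      (u + 1) * b ^ ((k : ℝ) ^ (u + 1)) / ((k : ℝ) ^ u * Real.log b) := by
  have hb0 : (0:ℝ) < b := by linarith
  have hL : 0 < Real.log b := Real.log_pos hb
  have hu1' : (0:ℝ) < u + 1 := by linarith
  set k0 : ℕ := ⌊(Real.log b) ^ (-(1 / (u + 1)))⌋₊ with hk0
  set q : ℝ := u / (u + 1) with hq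
  set L : ℝ := Real.log b with hLdef
  set a : ℝ := ((k0 : ℝ) + 1) ^ (u + 1) with ha
  set c : ℝ := (k : ℝ) ^ (u + 1) with hc
  have hk0pos : (0:ℝ) < (k0:ℝ) + 1 := by positivity
  have hapos : 0 < a := Real.rpow_pos_of_pos hk0pos _
  have hkpos : (0:ℝ) < (k:ℝ) := by
    have : 0 < k := lt_of_le_of_lt (Nat.zero_le k0) hk
    exact_mod_cast this
  have hac : a ≤ c := by
    apply Real.rpow_le_rpow hk0pos.le _ hu1'.le
    exact_mod_cast hk
  have hainv : L⁻¹ ≤ a := by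
    have h1 : L ^ (-(1 / (u + 1))) < (k0:ℝ) + 1 := Nat.lt_floor_add_one _
    have h2 : (L ^ (-(1 / (u + 1)))) ^ (u + 1) ≤ a :=
      Real.rpow_le_rpow (Real.rpow_nonneg hL.le _) h1.le hu1'.le
    have h3 : (L ^ (-(1 / (u + 1)))) ^ (u + 1) = L⁻¹ := by
      rw [← Real.rpow_mul hL.le]
      have : -(1 / (u + 1)) * (u + 1) = -1 := by field_simp
      rw [this, Real.rpow_neg_one]
    rw [← h3]; exact h2
  have htpos : ∀ t ∈ Set.Icc a c, 0 < t := fun t ht => lt_of_lt_of_le hapos ht.1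
  have hmul : ∀ t ∈ Set.Icc a c, 1 ≤ t * L := by
    intro t ht
    have h1 : L⁻¹ ≤ t := le_trans hainv ht.1
    calc (1:ℝ) = L⁻¹ * L := (inv_mul_cancel₀ hL.ne').symm
      _ ≤ t * L := mul_le_mul_of_nonneg_right h1 hL.le
  set C : ℝ := (u + 1) / L with hCdef
  set F : ℝ → ℝ := fun t => C * (b ^ t * t ^ (-q)) with hF
  set F' : ℝ → ℝ := fun t => C * (b ^ t * L * t ^ (-q) + b ^ t * (-q * t ^ (-q - 1))) with hF'
  have huIcc : Set.uIcc a c = Set.Icc a c := Set.uIcc_of_le hac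
  -- continuity facts
  have hcont_b : Continuous (fun t : ℝ => b ^ t) :=
    continuous_iff_continuousAt.mpr fun _ => Real.continuousAt_const_rpow hb0.ne'
  have hcont_pow : ∀ p : ℝ, ContinuousOn (fun t : ℝ => t ^ p) (Set.Icc a c) :=
    fun p t ht => (Real.continuousAt_rpow_const t p (Or.inl (htpos t ht).ne')).continuousWithinAt
  have hcontf : ContinuousOn (fun t : ℝ => b ^ t * t ^ (-q)) (Set.Icc a c) :=
    hcont_b.continuousOn.mul (hcont_pow _)
  have hcontF' : ContinuousOn F' (Set.Icc a c) := by
    apply continuousOn_const.mul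
    exact ((hcont_b.continuousOn.mul continuousOn_const).mul (hcont_pow _)).add
      (hcont_b.continuousOn.mul (continuousOn_const.mul (hcont_pow _)))
  have hderiv : ∀ t ∈ Set.uIcc a c, HasDerivAt F (F' t) t := by
    intro t ht
    rw [huIcc] at ht
    have h1 : HasDerivAt (fun s : ℝ => b ^ s) (b ^ t * L) t :=
      (Real.hasStrictDerivAt_const_rpow hb0 t).hasDerivAt
    have h2 : HasDerivAt (fun s : ℝ => s ^ (-q)) (-q * t ^ (-q - 1)) t :=
      Real.hasDerivAt_rpow_const (Or.inl (htpos t ht).ne')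
    exact (h1.mul h2).const_mul C
  -- integrability
  have hintf : IntervalIntegrable (fun t : ℝ => b ^ t * t ^ (-q)) MeasureTheory.volume a c := by
    apply ContinuousOn.intervalIntegrable
    rw [huIcc]; exact hcontf
  have hintF' : IntervalIntegrable F' MeasureTheory.volume a c := by
    apply ContinuousOn.intervalIntegrable
    rw [huIcc]; exact hcontF'
  -- pointwise bound
  have hle : ∀ t ∈ Set.Icc a c, b ^ t * t ^ (-q) ≤ F' t := by
    intro t ht
    have ht0 : 0 < t := htpos t ht
    have hP : 0 < b ^ t := Real.rpow_pos_of_pos hb0 t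
    have hT : 0 < t ^ (-q) := Real.rpow_pos_of_pos ht0 _
    have hsplit : t ^ (-q - 1) = t ^ (-q) / t := by
      rw [show -q - 1 = -q - (1:ℝ) by ring, Real.rpow_sub ht0, Real.rpow_one]
    have hFeq : F' t = (b ^ t * t ^ (-q)) * ((u + 1) - u / (t * L)) := by
      simp only [hF', hsplit]
      generalize t ^ (-q) = T
      rw [hCdef, hq]
      have hLne := hL.ne'
      have htne := ht0.ne'
      have hune := hu1'.ne'
      field_simp
      ring
    rw [hFeq]
    have hdiv : u / (t * L) ≤ u := div_le_self hu0.le (hmul t ht)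
    have : (1:ℝ) ≤ (u + 1) - u / (t * L) := by linarith
    exact le_mul_of_one_le_right (mul_pos hP hT).le this
  -- rewrite the integrand
  have hcongr : (∫ t in a..c, b ^ t / t ^ q) = ∫ t in a..c, b ^ t * t ^ (-q) := by
    apply intervalIntegral.integral_congr
    rw [huIcc]
    intro t ht
    show b ^ t / t ^ q = b ^ t * t ^ (-q)
    rw [Real.rpow_neg (htpos t ht).le, div_eq_mul_inv]
  have hFTC : (∫ t in a..c, F' t) = F c - F a :=
    intervalIntegral.integral_eq_sub_of_hasDerivAt hderiv hintF'
  have hFa : 0 ≤ F a := by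
    have : 0 < C := div_pos hu1' hL
    positivity
  have hFc : F c = (u + 1) * b ^ c / ((k:ℝ) ^ u * L) := by
    have h1 : c ^ (-q) = ((k:ℝ) ^ u)⁻¹ := by
      rw [hc, ← Real.rpow_mul hkpos.le]
      have : (u + 1) * (-q) = -u := by rw [hq]; field_simp
      rw [this, Real.rpow_neg hkpos.le]
    rw [hF]
    simp only [h1, hCdef]
    have hkne : ((k:ℝ) ^ u) ≠ 0 := (Real.rpow_pos_of_pos hkpos u).ne'
    field_simp
  calc (∫ t in a..c, b ^ t / t ^ q) = ∫ t in a..c, b ^ t * t ^ (-q) := hcongr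
    _ ≤ ∫ t in a..c, F' t := intervalIntegral.integral_mono_on hac hintf hintF' hle
    _ = F c - F a := hFTC
    _ ≤ F c := by linarith
    _ = (u + 1) * b ^ c / ((k:ℝ) ^ u * L) := hFc
end
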